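/- arXiv:2207.12219 — 2 statements merged into one kernel-verified Lean document; each statement's English description precedes it below -/
import Mathlib

section
/- Let T be an infinite rooted tree, ψ : T → ℂ, m ≠ n natural numbers, and suppose M_ψ : L^(m) → L^(n) is compact. Then lim_{|v|→∞} |ψ(v⁻)|Λ_n(|v|)/Λ_m(|v|) = 0. -/
open Real Filter

/-- Iterated logarithm: ℓ₀(x) = x, ℓ_{j+1}(x) = 1 + log ℓ_j(x). -/
noncomputable def ell : ℕ → ℝ → ℝ
  | 0, x => x
  | j + 1, x => 1 + Real.log (ell j x)

/-- Λ_k(x) = ∏_{j=0}^{k-1} ℓ_j(x). -/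
noncomputable def Lam (k : ℕ) (x : ℝ) : ℝ := ∏ j ∈ Finset.range k, ell j x

lemma ell_ge_one : ∀ (j : ℕ) {x : ℝ}, 1 ≤ x → 1 ≤ ell j x
  | 0, x, hx => hx
  | j + 1, x, hx => by
    have := ell_ge_one j hx
    simp only [ell]
    nlinarith [Real.log_nonneg this]

lemma ell_mono : ∀ (j : ℕ) {x y : ℝ}, 1 ≤ x → x ≤ y → ell j x ≤ ell j y
  | 0, x, y, hx, hxy => hxy
  | j + 1, x, y, hx, hxy => by
    have h1 := ell_ge_one j hx
    have h2 := ell_mono j hx hxy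
    simp only [ell]
    have := Real.log_le_log (by linarith) h2
    linarith

lemma Lam_ge_one (k : ℕ) {x : ℝ} (hx : 1 ≤ x) : 1 ≤ Lam k x := by
  show (1:ℝ) ≤ ∏ j ∈ Finset.range k, ell j x
  have := Finset.prod_le_prod (s := Finset.range k) (f := fun _ => (1:ℝ))
    (g := fun j => ell j x) (fun _ _ => zero_le_one) (fun j _ => ell_ge_one j hx)
  simpa using this

lemma Lam_mono (k : ℕ) {x y : ℝ} (hx : 1 ≤ x) (hxy : x ≤ y) : Lam k x ≤ Lam k y := by
  show (∏ j ∈ Finset.range k, ell j x) ≤ ∏ j ∈ Finset.range k, ell j y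
  exact Finset.prod_le_prod (fun j _ => by linarith [ell_ge_one j hx])
    (fun j _ => ell_mono j hx hxy)

lemma Lam_zero_le_one (k : ℕ) : Lam k (0 : ℝ) ≤ 1 := by
  cases k with
  | zero => simp [Lam]
  | succ k =>
    have : Lam (k+1) (0:ℝ) = 0 :=
      Finset.prod_eq_zero (Finset.mem_range.2 (Nat.succ_pos k)) (by simp [ell])
    simp [this]

lemma Lam_nat_mono (k : ℕ) {a b : ℕ} (h : a ≤ b) : Lam k (a:ℝ) ≤ Lam k (b:ℝ) := by
  rcases Nat.eq_zero_or_pos a with ha | ha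
  · subst ha
    rcases Nat.eq_zero_or_pos b with hb | hb
    · subst hb; simp
    · push_cast
      exact le_trans (Lam_zero_le_one k) (Lam_ge_one k (by exact_mod_cast hb))
  · exact Lam_mono k (by exact_mod_cast ha) (by exact_mod_cast h)

/-- Discrete derivative of f on a rooted tree given by a parent map:
`f v - f (parent v)` (automatically 0 at the root since `parent o = o`). -/
def Der {V : Type*} (parent : V → V) (f : V → ℂ) (v : V) : ℂ := f v - f (parent v)

/-- The set of values |f'(v)|·Λ_k(|v|) over v ≠ o; f ∈ L^(k) iff this set is bounded above. -/
def lipSet {V : Type*} (o : V) (parent : V → V) (depth : V → ℕ) (k : ℕ) (f : V → ℂ) : Set ℝ :=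
  {r | ∃ v, v ≠ o ∧ r = ‖Der parent f v‖ * Lam k (depth v)}

/-- ‖f‖_k = |f(o)| + sup_{v ≠ o} |f'(v)|·Λ_k(|v|). -/
noncomputable def lipNorm {V : Type*} (o : V) (parent : V → V) (depth : V → ℕ) (k : ℕ)
    (f : V → ℂ) : ℝ :=
  ‖f o‖ + sSup (lipSet o parent depth k f)

/-- If M_ψ : L^(m) → L^(n) is compact (in the sense of the standard criterion:
bounded pointwise-null sequences are mapped to norm-null sequences), then
|ψ(v⁻)|Λ_n(|v|)/Λ_m(|v|) → 0 as |v| → ∞. -/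
theorem compact_implies_nu_null {V : Type*} (o : V) (parent : V → V) (depth : V → ℕ)
    (hpar : parent o = o) (hdepth0 : depth o = 0)
    (hdepth : ∀ v, v ≠ o → depth v = depth (parent v) + 1)
    (hchild : ∀ v, ∃ w, w ≠ o ∧ parent w = v)
    (ψ : V → ℂ) (m n : ℕ) (hmn : m ≠ n)
    (hcompact : ∀ g : ℕ → V → ℂ,
      (∀ k, BddAbove (lipSet o parent depth m (g k))) →
      (∃ B : ℝ, ∀ k, lipNorm o parent depth m (g k) ≤ B) →
      (∀ v, Tendsto (fun k => g k v) atTop (nhds (0 : ℂ))) →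
      Tendsto (fun k => lipNorm o parent depth n (fun w => ψ w * g k w)) atTop
        (nhds (0 : ℝ))) :
    ∀ ε > (0 : ℝ), ∃ M : ℕ, ∀ v, v ≠ o → M ≤ depth v →
      ‖ψ (parent v)‖ * Lam n (depth v) / Lam m (depth v) < ε := by
  classical
  by_contra hcon
  push_neg at hcon
  obtain ⟨ε, hε, hcon⟩ := hcon
  choose v hvo hvd hvε using hcon
  have hdv : ∀ k, depth (v k) = depth (parent (v k)) + 1 := fun k => hdepth _ (hvo k)
  have hd1 : ∀ k, 1 ≤ depth (v k) := fun k => by rw [hdv k]; omega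
  have hΛ1 : ∀ k, 1 ≤ Lam m (depth (v k)) := fun k =>
    Lam_ge_one m (by exact_mod_cast hd1 k)
  have hΛpos : ∀ k, 0 < Lam m (depth (v k)) := fun k => lt_of_lt_of_le one_pos (hΛ1 k)
  have hΛn1 : ∀ k, 1 ≤ Lam n (depth (v k)) := fun k =>
    Lam_ge_one n (by exact_mod_cast hd1 k)
  have hparne : ∀ w : V, w ≠ o → parent w ≠ w := by
    intro w hw hh
    have h := hdepth w hw
    rw [hh] at h
    omega
  set g : ℕ → V → ℂ := fun k w =>
    if w = parent (v k) then (((Lam m (depth (v k)))⁻¹ : ℝ) : ℂ) else 0 with hg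
  -- bound on elements of the m-lipSet of g k
  have hDm : ∀ k, ∀ w, w ≠ o → ‖Der parent (g k) w‖ * Lam m (depth w) ≤ 1 := by
    intro k w hw
    by_cases h1 : w = parent (v k)
    · have hpw : parent w ≠ parent (v k) := by
        rw [← h1]; exact hparne w hw
      have hder : Der parent (g k) w = (((Lam m (depth (v k)))⁻¹ : ℝ) : ℂ) := by
        simp only [Der, hg]
        rw [if_pos h1, if_neg hpw, sub_zero]
      have hdw : depth w ≤ depth (v k) := by
        have := hdv k; rw [← h1] at this; omega
      rw [hder, Complex.norm_real, Real.norm_eq_abs, abs_of_nonneg (inv_nonneg.2 (hΛpos k).le)]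
      calc (Lam m (depth (v k)))⁻¹ * Lam m (depth w)
          ≤ (Lam m (depth (v k)))⁻¹ * Lam m (depth (v k)) := by
            apply mul_le_mul_of_nonneg_left (Lam_nat_mono m hdw)
              (inv_nonneg.2 (hΛpos k).le)
        _ = 1 := inv_mul_cancel₀ (hΛpos k).ne'
    · by_cases h2 : parent w = parent (v k)
      · have hder : Der parent (g k) w = -(((Lam m (depth (v k)))⁻¹ : ℝ) : ℂ) := by
          simp [Der, hg, h1, h2]
        have hdw : depth w = depth (v k) := by
          have h3 := hdepth w hw
          have h4 := hdv k
          rw [h2] at h3; omega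
        rw [hder, norm_neg, Complex.norm_real, Real.norm_eq_abs,
          abs_of_nonneg (inv_nonneg.2 (hΛpos k).le), hdw]
        exact le_of_eq (inv_mul_cancel₀ (hΛpos k).ne')
      · have hder : Der parent (g k) w = 0 := by
          simp [Der, hg, h1, h2]
        rw [hder]
        simp
  have hBdd : ∀ k, BddAbove (lipSet o parent depth m (g k)) := by
    intro k
    refine ⟨1, fun r hr => ?_⟩
    obtain ⟨w, hw, rfl⟩ := hr
    exact hDm k w hw
  have hB : ∀ k, lipNorm o parent depth m (g k) ≤ 2 := by
    intro k
    have h1 : ‖g k o‖ ≤ 1 := by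
      by_cases ho : o = parent (v k)
      · simp only [hg, if_pos ho, Complex.norm_real, Real.norm_eq_abs,
          abs_of_nonneg (inv_nonneg.2 (hΛpos k).le)]
        exact inv_le_one_of_one_le₀ (hΛ1 k)
      · simp [hg, ho]
    have h2 : sSup (lipSet o parent depth m (g k)) ≤ 1 := by
      apply Real.sSup_le _ zero_le_one
      rintro r ⟨w, hw, rfl⟩
      exact hDm k w hw
    unfold lipNorm
    linarith
  have hpt : ∀ w, Tendsto (fun k => g k w) atTop (nhds (0 : ℂ)) := by
    intro w
    have hev : ∀ᶠ k in atTop, g k w = 0 := by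
      filter_upwards [eventually_ge_atTop (depth w + 2)] with k hk
      have hne : w ≠ parent (v k) := by
        intro he
        have h2 := hdv k
        have h3 := hvd k
        rw [← he] at h2
        omega
      simp [hg, hne]
    exact Tendsto.congr' (hev.mono fun k hk => hk.symm) tendsto_const_nhds
  have htend := hcompact g hBdd ⟨2, hB⟩ hpt
  -- the key element and bound for the n-lipSet of ψ * g k
  have hCdef : ∀ k, ∀ w, w ≠ o →
      ‖Der parent (fun u => ψ u * g k u) w‖ * Lam n (depth w) ≤
        ‖ψ (parent (v k))‖ * (Lam m (depth (v k)))⁻¹ * Lam n (depth (v k)) := by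
    intro k w hw
    have hCnn : 0 ≤ ‖ψ (parent (v k))‖ * (Lam m (depth (v k)))⁻¹ :=
      mul_nonneg (norm_nonneg _) (inv_nonneg.2 (hΛpos k).le)
    by_cases h1 : w = parent (v k)
    · have hpw : parent w ≠ parent (v k) := by
        rw [← h1]; exact hparne w hw
      have hder : Der parent (fun u => ψ u * g k u) w =
          ψ (parent (v k)) * (((Lam m (depth (v k)))⁻¹ : ℝ) : ℂ) := by
        simp only [Der, hg]
        rw [if_pos h1, if_neg hpw, mul_zero, sub_zero, h1]
      have hdw : depth w ≤ depth (v k) := by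
        have := hdv k; rw [← h1] at this; omega
      rw [hder, norm_mul, Complex.norm_real, Real.norm_eq_abs, abs_of_nonneg (inv_nonneg.2 (hΛpos k).le)]
      exact mul_le_mul_of_nonneg_left (Lam_nat_mono n hdw) hCnn
    · by_cases h2 : parent w = parent (v k)
      · have hder : Der parent (fun u => ψ u * g k u) w =
            -(ψ (parent (v k)) * (((Lam m (depth (v k)))⁻¹ : ℝ) : ℂ)) := by
          simp [Der, hg, h1, h2]
        have hdw : depth w = depth (v k) := by
          have h3 := hdepth w hw
          have h4 := hdv k
          rw [h2] at h3; omega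
        rw [hder, norm_neg, norm_mul, Complex.norm_real, Real.norm_eq_abs,
          abs_of_nonneg (inv_nonneg.2 (hΛpos k).le), hdw]
      · have hder : Der parent (fun u => ψ u * g k u) w = 0 := by
          simp [Der, hg, h1, h2]
        rw [hder]
        simp only [norm_zero, zero_mul]
        exact mul_nonneg hCnn (by linarith [hΛn1 k])
  have hmem : ∀ k, ‖ψ (parent (v k))‖ * (Lam m (depth (v k)))⁻¹ *
      Lam n (depth (v k)) ∈ lipSet o parent depth n (fun u => ψ u * g k u) := by
    intro k
    refine ⟨v k, hvo k, ?_⟩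
    have hvne : v k ≠ parent (v k) := fun he => hparne (v k) (hvo k) he.symm
    have hder : Der parent (fun u => ψ u * g k u) (v k) =
        -(ψ (parent (v k)) * (((Lam m (depth (v k)))⁻¹ : ℝ) : ℂ)) := by
      simp [Der, hg, hvne]
    rw [hder, norm_neg, norm_mul, Complex.norm_real, Real.norm_eq_abs,
      abs_of_nonneg (inv_nonneg.2 (hΛpos k).le)]
  have hlow : ∀ k, ε ≤ lipNorm o parent depth n (fun u => ψ u * g k u) := by
    intro k
    have hub : BddAbove (lipSet o parent depth n (fun u => ψ u * g k u)) := by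
      refine ⟨‖ψ (parent (v k))‖ * (Lam m (depth (v k)))⁻¹ *
        Lam n (depth (v k)), fun r hr => ?_⟩
      obtain ⟨w, hw, rfl⟩ := hr
      exact hCdef k w hw
    have hεC : ε ≤ ‖ψ (parent (v k))‖ * (Lam m (depth (v k)))⁻¹ *
        Lam n (depth (v k)) := by
      have := hvε k
      rw [div_eq_mul_inv] at this
      linarith [this, mul_comm (Lam m ((depth (v k) : ℕ) : ℝ))⁻¹ (Lam n ((depth (v k) : ℕ) : ℝ))]
    have := le_csSup hub (hmem k)
    unfold lipNorm
    have habs : (0:ℝ) ≤ ‖ψ o * g k o‖ := norm_nonneg _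
    linarith
  have hev := htend.eventually (gt_mem_nhds hε)
  obtain ⟨k, hk⟩ := hev.exists
  exact absurd (hlow k) (not_le.2 hk)
end

section
/- Let T be an infinite rooted tree and m, n distinct natural numbers. There is no function ψ : T → ℂ such that M_ψ : L^(m) → L^(n) is a surjective or non-surjective isometry; i.e., no ψ satisfies ‖ψf‖_n = ‖f‖_m for all f ∈ L^(m). -/
open Real Filter

lemma ell_one (j : ℕ) : ell j 1 = 1 := by
  induction j with
  | zero => rfl
  | succ j ih => simp [ell, ih]

lemma Lam_one (k : ℕ) : Lam k 1 = 1 := by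
  simp [Lam, ell_one]

lemma one_le_ell {x : ℝ} (hx : 1 ≤ x) (j : ℕ) : 1 ≤ ell j x := by
  induction j with
  | zero => exact hx
  | succ j ih =>
    have h := Real.log_nonneg ih
    show (1 : ℝ) ≤ 1 + Real.log (ell j x)
    linarith

lemma one_lt_ell {x : ℝ} (hx : 2 ≤ x) (j : ℕ) : 1 < ell j x := by
  induction j with
  | zero => exact lt_of_lt_of_le one_lt_two hx
  | succ j ih =>
    have h : 0 < Real.log (ell j x) := Real.log_pos ih
    show (1 : ℝ) < 1 + Real.log (ell j x)
    linarith

lemma one_le_Lam {x : ℝ} (hx : 1 ≤ x) (k : ℕ) : 1 ≤ Lam k x := by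
  induction k with
  | zero => simp [Lam]
  | succ k ih =>
    have h := one_le_ell hx k
    rw [Lam, Finset.prod_range_succ, ← Lam]
    nlinarith

lemma Lam_strictMono {x : ℝ} (hx : 2 ≤ x) : StrictMono fun k => Lam k x := by
  apply strictMono_nat_of_lt_succ
  intro k
  have h1 : 1 ≤ Lam k x := one_le_Lam (by linarith) k
  have h2 : 1 < ell k x := one_lt_ell hx k
  calc Lam k x = Lam k x * 1 := (mul_one _).symm
    _ < Lam k x * ell k x := by nlinarith
    _ = Lam (k + 1) x := (Finset.prod_range_succ _ _).symm

/-- For distinct m, n there is no ψ making M_ψ : L^(m) → L^(n) an isometry. -/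
theorem no_isometry {V : Type*} (o : V) (parent : V → V) (depth : V → ℕ)
    (hpar : parent o = o) (hdepth0 : depth o = 0)
    (hdepth : ∀ v, v ≠ o → depth v = depth (parent v) + 1)
    (hchild : ∀ v, ∃ w, w ≠ o ∧ parent w = v)
    (hdeep : ∃ w : V, 2 ≤ depth w)
    (m n : ℕ) (hmn : m ≠ n) :
    ¬ ∃ ψ : V → ℂ, ∀ f : V → ℂ, BddAbove (lipSet o parent depth m f) →
      BddAbove (lipSet o parent depth n (fun v => ψ v * f v)) ∧
      lipNorm o parent depth n (fun v => ψ v * f v) = lipNorm o parent depth m f := by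
  classical
  rintro ⟨ψ, hψ⟩
  obtain ⟨w, hw2⟩ := hdeep
  obtain ⟨u, huo, hup⟩ := hchild o
  have hdu : depth u = 1 := by rw [hdepth u huo, hup, hdepth0]
  -- generic helper for computing sSup of a lipSet whose elements are all 0 or b, b attained
  have key : ∀ (k : ℕ) (f : V → ℂ) (b : ℝ), 0 ≤ b →
      (∃ v, v ≠ o ∧ ‖Der parent f v‖ * Lam k (depth v) = b) →
      (∀ v, v ≠ o → ‖Der parent f v‖ * Lam k (depth v) = 0 ∨
        ‖Der parent f v‖ * Lam k (depth v) = b) →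
      BddAbove (lipSet o parent depth k f) ∧
        sSup (lipSet o parent depth k f) = b := by
    rintro k f b hb ⟨v, hv, hvb⟩ hall
    have haS : b ∈ lipSet o parent depth k f := ⟨v, hv, hvb.symm⟩
    have hub : ∀ x ∈ lipSet o parent depth k f, x ≤ b := by
      rintro x ⟨z, hz, rfl⟩
      rcases hall z hz with h | h <;> rw [h]
      · exact hb
    refine ⟨⟨b, hub⟩, le_antisymm (csSup_le ⟨b, haS⟩ hub) (le_csSup ⟨b, hub⟩ haS)⟩
  -- depth of any non-root vertex is ≥ 1, so Λ ≥ 1 there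
  have hdepth_pos : ∀ v : V, v ≠ o → (1 : ℝ) ≤ (depth v : ℝ) := by
    intro v hv
    have := hdepth v hv
    exact_mod_cast Nat.one_le_iff_ne_zero.2 (by omega)
  -- ## Test 1 : f ≡ 1
  set f1 : V → ℂ := fun _ => 1 with hf1
  have hDer1 : ∀ v, Der parent f1 v = 0 := by intro v; simp [Der, hf1]
  obtain ⟨hb1, hs1⟩ := key m f1 0 le_rfl ⟨u, huo, by simp [hDer1]⟩
    (fun v hv => Or.inl (by simp [hDer1]))
  obtain ⟨hbψ1, heq1⟩ := hψ f1 hb1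
  have hnorm1 : lipNorm o parent depth m f1 = 1 := by
    rw [lipNorm, hs1]
    simp [hf1]
  -- ## Test 2 : g = (1/2) χ_o
  set g : V → ℂ := fun v => if v = o then (1 / 2 : ℂ) else 0 with hg
  have hDerg : ∀ v, v ≠ o → Der parent g v = if parent v = o then (-(1/2) : ℂ) else 0 := by
    intro v hv
    by_cases h : parent v = o <;> simp [Der, hg, hv, h]
  have hgval : ∀ v, v ≠ o → parent v = o →
      ‖Der parent g v‖ * Lam m (depth v) = 1 / 2 := by
    intro v hv h
    have hd : depth v = 1 := by rw [hdepth v hv, h, hdepth0]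
    rw [hDerg v hv, if_pos h, hd]
    push_cast
    rw [Lam_one]
    simp
  obtain ⟨hbg, hsg⟩ := key m g (1/2) (by norm_num) ⟨u, huo, hgval u huo hup⟩
    (by
      intro v hv
      by_cases h : parent v = o
      · exact Or.inr (hgval v hv h)
      · exact Or.inl (by rw [hDerg v hv, if_neg h]; simp))
  obtain ⟨hbψg, heqg⟩ := hψ g hbg
  have hDerψg : ∀ v, v ≠ o → Der parent (fun v => ψ v * g v) v
      = if parent v = o then (-(ψ o * (1/2)) : ℂ) else 0 := by
    intro v hv
    by_cases h : parent v = o <;> simp [Der, hg, hv, h]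
  have hψgval : ∀ v, v ≠ o → parent v = o →
      ‖Der parent (fun v => ψ v * g v) v‖ * Lam n (depth v)
        = ‖ψ o‖ / 2 := by
    intro v hv h
    have hd : depth v = 1 := by rw [hdepth v hv, h, hdepth0]
    rw [hDerψg v hv, if_pos h, hd]
    push_cast
    rw [Lam_one]
    simp [map_mul]
    ring
  have hsψg : sSup (lipSet o parent depth n (fun v => ψ v * g v)) = ‖ψ o‖ / 2 := by
    refine (key n (fun v => ψ v * g v) (‖ψ o‖ / 2) (by positivity)
      ⟨u, huo, hψgval u huo hup⟩ ?_).2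
    intro v hv
    by_cases h : parent v = o
    · exact Or.inr (hψgval v hv h)
    · exact Or.inl (by rw [hDerψg v hv, if_neg h]; simp)
  have hgo : g o = 1 / 2 := by simp [hg]
  have habs : ‖ψ o‖ = 1 := by
    have h1 : lipNorm o parent depth m g = 1 := by
      simp only [lipNorm]
      rw [hsg, hgo]
      norm_num
    have h2 : lipNorm o parent depth n (fun v => ψ v * g v) = ‖ψ o‖ := by
      simp only [lipNorm]
      rw [hsψg]
      have : ‖ψ o * g o‖ = ‖ψ o‖ / 2 := by
        rw [norm_mul, hgo]
        norm_num
        ring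
      simp only [this]
      ring
    rw [h1, h2] at heqg
    exact heqg
  -- From test 1 : sSup of lipSet n ψ is 0, hence ψ is constant
  have hfun1 : (fun v => ψ v * f1 v) = ψ := by funext v; simp [hf1]
  rw [hfun1] at hbψ1 heq1
  have hsψ1 : sSup (lipSet o parent depth n ψ) = 0 := by
    have h := heq1
    rw [hnorm1] at h
    simp only [lipNorm] at h
    rw [habs] at h
    linarith
  have hstep : ∀ v, ψ v = ψ (parent v) := by
    intro v
    by_cases hv : v = o
    · rw [hv, hpar]
    · have hmem : ‖Der parent ψ v‖ * Lam n (depth v)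
          ∈ lipSet o parent depth n ψ := ⟨v, hv, rfl⟩
      have hle := le_csSup hbψ1 hmem
      rw [hsψ1] at hle
      have hL : (1 : ℝ) ≤ Lam n (depth v) := one_le_Lam (hdepth_pos v hv) n
      have hge : 0 ≤ ‖Der parent ψ v‖ := by positivity
      have h0 : ‖Der parent ψ v‖ = 0 := by nlinarith
      have h1 := norm_eq_zero.1 h0
      rw [Der, sub_eq_zero] at h1
      exact h1
  have hconstAux : ∀ d : ℕ, ∀ v : V, depth v = d → ψ v = ψ o := by
    intro d
    induction d using Nat.strong_induction_on with
    | _ d ih =>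
      intro v hv
      by_cases h : v = o
      · rw [h]
      · have hd : depth v = depth (parent v) + 1 := hdepth v h
        have hlt : depth (parent v) < d := by omega
        rw [hstep v]
        exact ih _ hlt _ rfl
  have hconst : ∀ v, ψ v = ψ o := fun v => hconstAux (depth v) v rfl
  -- ## Test 3 : indicator of the subtree below w
  have hwo : w ≠ o := by
    intro h; rw [h, hdepth0] at hw2; omega
  have hiter_le : ∀ (j : ℕ) (v : V), depth (parent^[j] v) ≤ depth v := by
    intro j
    induction j with
    | zero => intro v; rfl
    | succ j ih =>
      intro v
      rw [Function.iterate_succ_apply']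
      refine le_trans ?_ (ih v)
      by_cases h : parent^[j] v = o
      · rw [h, hpar]
      · rw [hdepth _ h]; omega
  set P : V → Prop := fun v => ∃ j : ℕ, parent^[j] v = w with hP
  set f3 : V → ℂ := fun v => if P v then 1 else 0 with hf3
  have hPo : ¬ P o := by
    rintro ⟨j, hj⟩
    rw [Function.iterate_fixed hpar j] at hj
    exact hwo hj.symm
  have hPw : P w := ⟨0, rfl⟩
  have hPpw : ¬ P (parent w) := by
    rintro ⟨j, hj⟩
    have h1 := hiter_le j (parent w)
    rw [hj] at h1
    have h2 : depth w = depth (parent w) + 1 := hdepth w hwo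
    omega
  have hPup : ∀ v, P (parent v) → P v := by
    rintro v ⟨j, hj⟩
    exact ⟨j + 1, by rwa [Function.iterate_succ_apply]⟩
  have hPdown : ∀ v, v ≠ w → P v → P (parent v) := by
    rintro v hv ⟨j, hj⟩
    cases j with
    | zero => exact absurd hj hv
    | succ j => exact ⟨j, by rwa [Function.iterate_succ_apply] at hj⟩
  have hDer3 : ∀ v, Der parent f3 v = if v = w then 1 else 0 := by
    intro v
    by_cases hv : v = w
    · subst hv
      simp [Der, hf3, hPw, hPpw]
    · rw [if_neg hv]
      by_cases h : P v
      · have := hPup v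
        simp [Der, hf3, h, hPdown v hv h]
      · have h2 : ¬ P (parent v) := fun hp => h (hPup v hp)
        simp [Der, hf3, h, h2]
  have hd2 : (2 : ℝ) ≤ (depth w : ℝ) := by exact_mod_cast hw2
  have hd1 : (1 : ℝ) ≤ (depth w : ℝ) := by linarith
  have h3val : ∀ k, ‖Der parent f3 w‖ * Lam k (depth w) = Lam k (depth w) := by
    intro k; rw [hDer3 w, if_pos rfl]; simp
  have h3all : ∀ k, ∀ v, v ≠ o → ‖Der parent f3 v‖ * Lam k (depth v) = 0 ∨
      ‖Der parent f3 v‖ * Lam k (depth v) = Lam k (depth w) := by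
    intro k v hv
    by_cases h : v = w
    · subst h; exact Or.inr (h3val k)
    · exact Or.inl (by rw [hDer3 v, if_neg h]; simp)
  obtain ⟨hb3, hs3⟩ := key m f3 (Lam m (depth w)) (by linarith [one_le_Lam hd1 m])
    ⟨w, hwo, h3val m⟩ (h3all m)
  obtain ⟨hbψ3, heq3⟩ := hψ f3 hb3
  -- Der of ψ·f3 equals ψ o times Der f3
  have hDerψ3 : ∀ v, Der parent (fun v => ψ v * f3 v) v = ψ o * Der parent f3 v := by
    intro v
    simp only [Der, hconst v, hconst (parent v)]
    ring
  have hψ3val : ‖Der parent (fun v => ψ v * f3 v) w‖ * Lam n (depth w)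
      = Lam n (depth w) := by
    rw [hDerψ3 w, norm_mul, habs, hDer3 w, if_pos rfl]
    simp
  have hsψ3 : sSup (lipSet o parent depth n (fun v => ψ v * f3 v)) = Lam n (depth w) := by
    refine (key n (fun v => ψ v * f3 v) (Lam n (depth w))
      (by linarith [one_le_Lam hd1 n]) ⟨w, hwo, hψ3val⟩ ?_).2
    intro v hv
    by_cases h : v = w
    · subst h; exact Or.inr hψ3val
    · exact Or.inl (by rw [hDerψ3 v, norm_mul, habs, hDer3 v, if_neg h]; simp)
  have hf3o : f3 o = 0 := by simp [hf3, hPo]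
  have hfinal : Lam n (depth w) = Lam m (depth w) := by
    have h1 : lipNorm o parent depth m f3 = Lam m (depth w) := by
      simp [lipNorm, hs3, hf3o]
    have h2 : lipNorm o parent depth n (fun v => ψ v * f3 v) = Lam n (depth w) := by
      simp [lipNorm, hsψ3, hf3o]
    rw [h1, h2] at heq3
    exact heq3
  exact hmn ((Lam_strictMono hd2).injective hfinal.symm)
end
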